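/- For a partition (λ_1, λ_2) with λ_1 ≥ λ_2 ≥ 0, the Le-filling generating polynomial satisfies q·F_{(λ_1,λ_2)}(q) = −(1+q)^{λ_1} + (1+q)^{λ_1−λ_2+1}·(1+q+q^2)^{λ_2}. -/

import Mathlib

/-- `D` is a Le-filling: no `0` has simultaneously a `1` above it in its column and a
`1` to its left in its row. -/
def IsLeFilling {k : ℕ} (lam : Fin k → ℕ) (D : ∀ i : Fin k, Fin (lam i) → Bool) : Prop :=
  ∀ (i i' : Fin k) (j j' : ℕ) (hj : j < lam i) (hj' : j' < lam i) (hji' : j < lam i'),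
    i' < i → j' < j → D i' ⟨j, hji'⟩ = true → D i ⟨j', hj'⟩ = true → D i ⟨j, hj⟩ = true

/-- The number of `1`'s in a filling. -/
def onesCount {k : ℕ} (lam : Fin k → ℕ) (D : ∀ i : Fin k, Fin (lam i) → Bool) : ℕ :=
  ∑ i : Fin k, (Finset.univ.filter fun j : Fin (lam i) => D i j = true).card

/-- The number of Le-fillings with exactly `r` ones (coefficient of `q^r` in `F_λ(q)`). -/
noncomputable def leF {k : ℕ} (lam : Fin k → ℕ) (r : ℕ) : ℕ :=
  Nat.card {D : ∀ i : Fin k, Fin (lam i) → Bool // IsLeFilling lam D ∧ onesCount lam D = r}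


open Polynomial Finset
open scoped Classical

noncomputable section LeAux

def ones {n : ℕ} (a : Fin n → Bool) : ℕ := (Finset.univ.filter fun j => a j = true).card

lemma ones_eq_sum {n : ℕ} (a : Fin n → Bool) :
    ones a = ∑ j, (if a j = true then 1 else 0) := Finset.card_filter _ _

lemma ones_le {n : ℕ} (a : Fin n → Bool) : ones a ≤ n := by
  calc ones a ≤ (Finset.univ : Finset (Fin n)).card := Finset.card_filter_le _ _
  _ = n := by simp

lemma ones_cons {n : ℕ} (c : Bool) (v : Fin n → Bool) :
    ones (Fin.cons c v) = (if c = true then 1 else 0) + ones v := by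
  rw [ones_eq_sum, ones_eq_sum, Fin.sum_univ_succ]
  simp

lemma sum_pi_succ {M : Type*} [AddCommMonoid M] (n : ℕ) (f : (Fin (n+1) → Bool) → M) :
    ∑ a, f a = ∑ c : Bool, ∑ v : Fin n → Bool, f (Fin.cons c v) := by
  rw [← (Fin.consEquiv (fun _ : Fin (n+1) => Bool)).sum_comp f, Fintype.sum_prod_type]
  rfl

lemma ones_cons_true {n : ℕ} (v : Fin n → Bool) : ones (Fin.cons true v) = 1 + ones v := by
  rw [ones_cons]; simp

lemma ones_cons_false {n : ℕ} (v : Fin n → Bool) : ones (Fin.cons false v) = ones v := by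
  rw [ones_cons]; simp

lemma sum_pow_ones (n : ℕ) :
    ∑ a : Fin n → Bool, (X : Polynomial ℤ) ^ ones a = (1 + X) ^ n := by
  induction n with
  | zero => simp [ones]
  | succ n ih =>
    rw [sum_pi_succ n (fun a => (X : Polynomial ℤ) ^ ones a), Fintype.sum_bool]
    simp only [ones_cons_true, ones_cons_false, pow_add, pow_one]
    rw [← Finset.mul_sum, ih]
    ring

/-- The Le condition on a pair of rows. -/
def Qc (l1 l2 : ℕ) (a : Fin l1 → Bool) (b : Fin l2 → Bool) : Prop :=
  ∀ (j j' : Fin l2) (hj : (j : ℕ) < l1), j' < j → a ⟨j, hj⟩ = true → b j' = true →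
    b j = true

/-- The "dominance" condition: every 1 on top has a 1 below. -/
def Rc (l1 l2 : ℕ) (a : Fin l1 → Bool) (b : Fin l2 → Bool) : Prop :=
  ∀ (j : Fin l2) (hj : (j : ℕ) < l1), a ⟨j, hj⟩ = true → b j = true

def Pgen (l1 l2 : ℕ) : Polynomial ℤ :=
  ∑ p : (Fin l1 → Bool) × (Fin l2 → Bool),
    if Qc l1 l2 p.1 p.2 then X ^ (ones p.1 + ones p.2) else 0

def Tgen (l1 l2 : ℕ) : Polynomial ℤ :=
  ∑ p : (Fin l1 → Bool) × (Fin l2 → Bool),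
    if Rc l1 l2 p.1 p.2 then X ^ (ones p.1 + ones p.2) else 0

lemma Rc_cons_iff {m l2 : ℕ} (a0 b0 : Bool) (a : Fin m → Bool) (b : Fin l2 → Bool) :
    Rc (m+1) (l2+1) (Fin.cons a0 a) (Fin.cons b0 b) ↔
      ((a0 = true → b0 = true) ∧ Rc m l2 a b) := by
  constructor
  · intro H
    refine ⟨fun h0 => H 0 (Nat.succ_pos m) h0, fun j hj ha => ?_⟩
    have := H j.succ (by simpa using Nat.succ_lt_succ hj) ?_
    · simpa [Fin.cons_succ] using this
    · have : (⟨(j.succ : ℕ), by simpa using Nat.succ_lt_succ hj⟩ : Fin (m+1))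
          = (⟨(j : ℕ), hj⟩ : Fin m).succ := by
        ext; simp
      rw [this, Fin.cons_succ]
      exact ha
  · rintro ⟨h0, H⟩ j hj ha
    rcases Fin.eq_zero_or_eq_succ j with rfl | ⟨j0, rfl⟩
    · exact h0 ha
    · have hj0 : (j0 : ℕ) < m := by simpa using hj
      rw [Fin.cons_succ]
      apply H j0 hj0
      have : (⟨((j0.succ : Fin (l2+1)) : ℕ), hj⟩ : Fin (m+1))
          = (⟨(j0 : ℕ), hj0⟩ : Fin m).succ := by ext; simp
      rw [this, Fin.cons_succ] at ha
      exact ha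

lemma Qc_cons_false_iff {m l2 : ℕ} (a0 : Bool) (a : Fin m → Bool) (b : Fin l2 → Bool) :
    Qc (m+1) (l2+1) (Fin.cons a0 a) (Fin.cons false b) ↔ Qc m l2 a b := by
  constructor
  · intro H j j' hj hlt ha hb
    have key := H j.succ j'.succ (by simpa using Nat.succ_lt_succ hj)
      (by simpa using hlt) ?_ (by simpa [Fin.cons_succ] using hb)
    · simpa [Fin.cons_succ] using key
    · have : (⟨((j.succ : Fin (l2+1)) : ℕ), by simpa using Nat.succ_lt_succ hj⟩ : Fin (m+1))
          = (⟨(j : ℕ), hj⟩ : Fin m).succ := by ext; simp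
      rw [this, Fin.cons_succ]
      exact ha
  · intro H j j' hj hlt ha hb
    rcases Fin.eq_zero_or_eq_succ j' with rfl | ⟨j0', rfl⟩
    · simp at hb
    · rcases Fin.eq_zero_or_eq_succ j with rfl | ⟨j0, rfl⟩
      · exact absurd hlt (by simp [Fin.lt_iff_val_lt_val])
      · have hj0 : (j0 : ℕ) < m := by simpa using hj
        have hlt0 : j0' < j0 := Fin.succ_lt_succ_iff.mp hlt
        rw [Fin.cons_succ]
        apply H j0 j0' hj0 hlt0
        · have : (⟨((j0.succ : Fin (l2+1)) : ℕ), hj⟩ : Fin (m+1))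
              = (⟨(j0 : ℕ), hj0⟩ : Fin m).succ := by ext; simp
          rw [this, Fin.cons_succ] at ha
          exact ha
        · simpa [Fin.cons_succ] using hb

lemma Qc_cons_true_iff {m l2 : ℕ} (a0 : Bool) (a : Fin m → Bool) (b : Fin l2 → Bool) :
    Qc (m+1) (l2+1) (Fin.cons a0 a) (Fin.cons true b) ↔ Rc m l2 a b := by
  constructor
  · intro H j hj ha
    have key := H j.succ 0 (by simpa using Nat.succ_lt_succ hj)
      (by simp [Fin.lt_iff_val_lt_val]) ?_ (by simp)
    · simpa [Fin.cons_succ] using key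
    · have : (⟨((j.succ : Fin (l2+1)) : ℕ), by simpa using Nat.succ_lt_succ hj⟩ : Fin (m+1))
          = (⟨(j : ℕ), hj⟩ : Fin m).succ := by ext; simp
      rw [this, Fin.cons_succ]
      exact ha
  · intro H j j' hj hlt ha _
    rcases Fin.eq_zero_or_eq_succ j with rfl | ⟨j0, rfl⟩
    · exact absurd hlt (by simp [Fin.lt_iff_val_lt_val])
    · have hj0 : (j0 : ℕ) < m := by simpa using hj
      rw [Fin.cons_succ]
      apply H j0 hj0
      have : (⟨((j0.succ : Fin (l2+1)) : ℕ), hj⟩ : Fin (m+1))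
          = (⟨(j0 : ℕ), hj0⟩ : Fin m).succ := by ext; simp
      rw [this, Fin.cons_succ] at ha
      exact ha

lemma sum_pair_split {M : Type*} [AddCommMonoid M] (m l2 : ℕ)
    (f : (Fin (m+1) → Bool) × (Fin (l2+1) → Bool) → M) :
    ∑ p, f p = ∑ a0 : Bool, ∑ b0 : Bool, ∑ a : Fin m → Bool, ∑ b : Fin l2 → Bool,
      f (Fin.cons a0 a, Fin.cons b0 b) := by
  rw [Fintype.sum_prod_type, sum_pi_succ m (fun x => ∑ y, f (x, y))]
  refine Finset.sum_congr rfl fun a0 _ => ?_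
  calc ∑ a : Fin m → Bool, ∑ y : Fin (l2+1) → Bool, f (Fin.cons a0 a, y)
      = ∑ a : Fin m → Bool, ∑ b0 : Bool, ∑ b : Fin l2 → Bool,
          f (Fin.cons a0 a, Fin.cons b0 b) :=
        Finset.sum_congr rfl fun a _ => sum_pi_succ l2 _
    _ = _ := Finset.sum_comm

lemma Tgen_zero (m : ℕ) : Tgen m 0 = (1 + X) ^ m := by
  calc Tgen m 0 = ∑ x : Fin m → Bool, (X : Polynomial ℤ) ^ ones x := by
        rw [Tgen, Fintype.sum_prod_type]
        refine Finset.sum_congr rfl fun x _ => ?_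
        rw [Fintype.sum_unique]
        simp [Rc, Qc, ones]
    _ = (1 + X) ^ m := sum_pow_ones m

lemma Pgen_zero (m : ℕ) : Pgen m 0 = (1 + X) ^ m := by
  calc Pgen m 0 = ∑ x : Fin m → Bool, (X : Polynomial ℤ) ^ ones x := by
        rw [Pgen, Fintype.sum_prod_type]
        refine Finset.sum_congr rfl fun x _ => ?_
        rw [Fintype.sum_unique]
        simp [Rc, Qc, ones]
    _ = (1 + X) ^ m := sum_pow_ones m

lemma Tgen_succ (m l2 : ℕ) : Tgen (m+1) (l2+1) = (1 + X + X^2) * Tgen m l2 := by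
  have point : ∀ (a0 b0 : Bool) (a : Fin m → Bool) (b : Fin l2 → Bool),
      (if Rc (m+1) (l2+1) (Fin.cons a0 a) (Fin.cons b0 b)
        then (X : Polynomial ℤ) ^ (ones (Fin.cons a0 a) + ones (Fin.cons b0 b)) else 0)
      = (if (a0 = true → b0 = true)
          then (X : Polynomial ℤ) ^
            ((if a0 = true then 1 else 0) + (if b0 = true then 1 else 0)) else 0)
        * (if Rc m l2 a b then X ^ (ones a + ones b) else 0) := by
    intro a0 b0 a b
    rw [ones_cons, ones_cons]
    by_cases h1 : (a0 = true → b0 = true) <;> by_cases h2 : Rc m l2 a b <;>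
      simp [Rc_cons_iff, h1, h2, pow_add] <;> ring
  rw [Tgen, sum_pair_split]
  simp only [point]
  have factor : ∀ a0 b0 : Bool,
      (∑ a : Fin m → Bool, ∑ b : Fin l2 → Bool,
        (if (a0 = true → b0 = true)
            then (X : Polynomial ℤ) ^
              ((if a0 = true then 1 else 0) + (if b0 = true then 1 else 0)) else 0)
          * (if Rc m l2 a b then X ^ (ones a + ones b) else 0))
      = (if (a0 = true → b0 = true)
          then (X : Polynomial ℤ) ^
            ((if a0 = true then 1 else 0) + (if b0 = true then 1 else 0)) else 0)
        * Tgen m l2 := by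
    intro a0 b0
    rw [Tgen, Fintype.sum_prod_type, Finset.mul_sum]
    exact Finset.sum_congr rfl fun a _ => (Finset.mul_sum _ _ _).symm
  simp only [factor]
  rw [Fintype.sum_bool, Fintype.sum_bool, Fintype.sum_bool]
  norm_num
  ring

lemma Pgen_succ (m l2 : ℕ) :
    Pgen (m+1) (l2+1) = (1 + X) * Pgen m l2 + (X + X^2) * Tgen m l2 := by
  have pull : ∀ (c : Polynomial ℤ) (g : (Fin m → Bool) → (Fin l2 → Bool) → Polynomial ℤ),
      (∑ a : Fin m → Bool, ∑ b : Fin l2 → Bool, c * g a b)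
        = c * ∑ a : Fin m → Bool, ∑ b : Fin l2 → Bool, g a b := by
    intro c g
    rw [Finset.mul_sum]
    exact Finset.sum_congr rfl fun a _ => (Finset.mul_sum _ _ _).symm
  have hT : (∑ a : Fin m → Bool, ∑ b : Fin l2 → Bool,
      (if Rc m l2 a b then (X : Polynomial ℤ) ^ (ones a + ones b) else 0)) = Tgen m l2 := by
    rw [Tgen, Fintype.sum_prod_type]
  have hP : (∑ a : Fin m → Bool, ∑ b : Fin l2 → Bool,
      (if Qc m l2 a b then (X : Polynomial ℤ) ^ (ones a + ones b) else 0)) = Pgen m l2 := by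
    rw [Pgen, Fintype.sum_prod_type]
  have pt_tt : ∀ (a : Fin m → Bool) (b : Fin l2 → Bool),
      (if Qc (m+1) (l2+1) (Fin.cons true a) (Fin.cons true b)
        then (X : Polynomial ℤ) ^ (ones (Fin.cons true a) + ones (Fin.cons true b)) else 0)
      = X^2 * (if Rc m l2 a b then X ^ (ones a + ones b) else 0) := by
    intro a b
    rw [ones_cons_true, ones_cons_true]
    by_cases h2 : Rc m l2 a b <;> simp [Qc_cons_true_iff, h2, pow_add] <;> ring
  have pt_ft : ∀ (a : Fin m → Bool) (b : Fin l2 → Bool),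
      (if Qc (m+1) (l2+1) (Fin.cons false a) (Fin.cons true b)
        then (X : Polynomial ℤ) ^ (ones (Fin.cons false a) + ones (Fin.cons true b)) else 0)
      = X * (if Rc m l2 a b then X ^ (ones a + ones b) else 0) := by
    intro a b
    rw [ones_cons_false, ones_cons_true]
    by_cases h2 : Rc m l2 a b <;> simp [Qc_cons_true_iff, h2, pow_add] <;> ring
  have pt_tf : ∀ (a : Fin m → Bool) (b : Fin l2 → Bool),
      (if Qc (m+1) (l2+1) (Fin.cons true a) (Fin.cons false b)
        then (X : Polynomial ℤ) ^ (ones (Fin.cons true a) + ones (Fin.cons false b)) else 0)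
      = X * (if Qc m l2 a b then X ^ (ones a + ones b) else 0) := by
    intro a b
    rw [ones_cons_true, ones_cons_false]
    by_cases h2 : Qc m l2 a b <;> simp [Qc_cons_false_iff, h2, pow_add] <;> ring
  have pt_ff : ∀ (a : Fin m → Bool) (b : Fin l2 → Bool),
      (if Qc (m+1) (l2+1) (Fin.cons false a) (Fin.cons false b)
        then (X : Polynomial ℤ) ^ (ones (Fin.cons false a) + ones (Fin.cons false b)) else 0)
      = (if Qc m l2 a b then (X : Polynomial ℤ) ^ (ones a + ones b) else 0) := by
    intro a b
    rw [ones_cons_false, ones_cons_false]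
    by_cases h2 : Qc m l2 a b <;> simp [Qc_cons_false_iff, h2]
  rw [Pgen, sum_pair_split, Fintype.sum_bool, Fintype.sum_bool, Fintype.sum_bool]
  rw [Finset.sum_congr rfl fun a (_ : a ∈ Finset.univ) =>
        Finset.sum_congr rfl fun b (_ : b ∈ Finset.univ) => pt_tt a b]
  rw [Finset.sum_congr rfl fun a (_ : a ∈ Finset.univ) =>
        Finset.sum_congr rfl fun b (_ : b ∈ Finset.univ) => pt_tf a b]
  rw [Finset.sum_congr rfl fun a (_ : a ∈ Finset.univ) =>
        Finset.sum_congr rfl fun b (_ : b ∈ Finset.univ) => pt_ft a b]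
  rw [Finset.sum_congr rfl fun a (_ : a ∈ Finset.univ) =>
        Finset.sum_congr rfl fun b (_ : b ∈ Finset.univ) => pt_ff a b]
  rw [pull, pull, pull, hT, hP]
  ring

lemma Tgen_closed : ∀ (m l2 : ℕ), l2 ≤ m →
    Tgen m l2 = (1 + X + X^2) ^ l2 * (1 + X) ^ (m - l2) := by
  intro m l2
  induction l2 generalizing m with
  | zero => intro _; rw [Tgen_zero]; simp
  | succ l2 ih =>
    intro hl
    obtain ⟨m', rfl⟩ : ∃ m', m = m' + 1 := ⟨m - 1, by omega⟩
    have h' : l2 ≤ m' := by omega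
    rw [Tgen_succ, ih m' h', pow_succ]
    have : m' + 1 - (l2 + 1) = m' - l2 := by omega
    rw [this]
    ring

lemma Pgen_closed (l2 : ℕ) : ∀ l1 : ℕ, l2 ≤ l1 →
    X * Pgen l1 l2 = -(1 + X) ^ l1 + (1 + X) ^ (l1 - l2 + 1) * (1 + X + X^2) ^ l2 := by
  induction l2 with
  | zero =>
    intro l1 _
    rw [Pgen_zero]
    simp only [Nat.sub_zero, pow_zero, mul_one, pow_succ]
    ring
  | succ l2 ih =>
    intro l1 hl
    obtain ⟨m, rfl⟩ : ∃ m, l1 = m + 1 := ⟨l1 - 1, by omega⟩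
    have hlm : l2 ≤ m := by omega
    rw [Pgen_succ, Tgen_closed m l2 hlm]
    have := ih m hlm
    have hsub : m + 1 - (l2 + 1) = m - l2 := by omega
    rw [hsub]
    calc X * ((1 + X) * Pgen m l2 + (X + X ^ 2) * ((1 + X + X ^ 2) ^ l2 * (1 + X) ^ (m - l2)))
        = (1 + X) * (X * Pgen m l2)
            + X * (X + X ^ 2) * ((1 + X + X ^ 2) ^ l2 * (1 + X) ^ (m - l2)) := by ring
      _ = (1 + X) * (-(1 + X) ^ m + (1 + X) ^ (m - l2 + 1) * (1 + X + X ^ 2) ^ l2)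
            + X * (X + X ^ 2) * ((1 + X + X ^ 2) ^ l2 * (1 + X) ^ (m - l2)) := by rw [this]
      _ = -(1 + X) ^ (m + 1) + (1 + X) ^ (m - l2 + 1) * (1 + X + X ^ 2) ^ (l2 + 1) := by
          rw [pow_succ (1 + X) (m - l2), pow_succ (1 + X) m, pow_succ (1 + X + X^2) l2]
          ring

def pairEquiv (l1 l2 : ℕ) :
    (∀ i : Fin 2, Fin (![l1, l2] i) → Bool) ≃ (Fin l1 → Bool) × (Fin l2 → Bool) where
  toFun D := (D 0, D 1)
  invFun p := Fin.cons p.1 (Fin.cons p.2 (fun i => i.elim0))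
  left_inv D := by
    funext i
    refine Fin.cases ?_ (fun i' => Fin.cases ?_ (fun i'' => i''.elim0) i') i
    · rfl
    · rfl
  right_inv p := rfl

lemma isLe_iff (l1 l2 : ℕ) (D : ∀ i : Fin 2, Fin (![l1, l2] i) → Bool) :
    IsLeFilling ![l1, l2] D ↔ Qc l1 l2 (D 0) (D 1) := by
  constructor
  · intro H j j' hj hlt ha hb
    have key := H 1 0 (j : ℕ) (j' : ℕ) j.isLt j'.isLt hj (by decide)
      (Fin.lt_iff_val_lt_val.mp hlt) ha ?_
    · simpa using key
    · simpa using hb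
  · intro H i i' j j' hj hj' hji' hii' hjj' ha hb
    have hi2 : (i : ℕ) < 2 := i.isLt
    have hii : (i' : ℕ) < (i : ℕ) := hii'
    obtain rfl : i = 1 := by
      apply Fin.ext
      simp only [Fin.val_one]
      omega
    obtain rfl : i' = 0 := by
      apply Fin.ext
      simp only [Fin.val_zero]
      omega
    exact H ⟨j, hj⟩ ⟨j', hj'⟩ hji' hjj' ha hb

lemma onesCount_eq (l1 l2 : ℕ) (D : ∀ i : Fin 2, Fin (![l1, l2] i) → Bool) :
    onesCount ![l1, l2] D = ones (D 0) + ones (D 1) := by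
  rw [onesCount, Fin.sum_univ_two]
  rfl

lemma leF_eq (l1 l2 r : ℕ) :
    leF ![l1, l2] r
      = (Finset.univ.filter fun p : (Fin l1 → Bool) × (Fin l2 → Bool) =>
          Qc l1 l2 p.1 p.2 ∧ ones p.1 + ones p.2 = r).card := by
  rw [leF, Nat.card_congr (Equiv.subtypeEquiv
    (q := fun p : (Fin l1 → Bool) × (Fin l2 → Bool) =>
      Qc l1 l2 p.1 p.2 ∧ ones p.1 + ones p.2 = r)
    (pairEquiv l1 l2)
    (fun D => and_congr (isLe_iff l1 l2 D) (by rw [onesCount_eq l1 l2 D]; exact Iff.rfl)))]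
  rw [Nat.card_eq_fintype_card, Fintype.card_subtype]

lemma sum_bridge (l1 l2 : ℕ) :
    (∑ r ∈ Finset.range (l1 + l2 + 1), Polynomial.C ((leF ![l1, l2] r : ℕ) : ℤ) * X ^ r)
      = Pgen l1 l2 := by
  have hmap : ∀ p ∈ Finset.univ.filter
      (fun p : (Fin l1 → Bool) × (Fin l2 → Bool) => Qc l1 l2 p.1 p.2),
      ones p.1 + ones p.2 ∈ Finset.range (l1 + l2 + 1) := by
    intro p _
    have h1 := ones_le p.1
    have h2 := ones_le p.2
    simp only [Finset.mem_range]
    omega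
  calc (∑ r ∈ Finset.range (l1 + l2 + 1), Polynomial.C ((leF ![l1, l2] r : ℕ) : ℤ) * X ^ r)
      = ∑ r ∈ Finset.range (l1 + l2 + 1),
          ∑ p ∈ (Finset.univ.filter
              (fun p : (Fin l1 → Bool) × (Fin l2 → Bool) => Qc l1 l2 p.1 p.2)).filter
            (fun p => ones p.1 + ones p.2 = r),
            (X : Polynomial ℤ) ^ (ones p.1 + ones p.2) := by
        refine Finset.sum_congr rfl fun r _ => ?_
        rw [leF_eq, Finset.filter_filter]
        rw [Finset.sum_congr rfl
          (fun p hp => by rw [(Finset.mem_filter.mp hp).2.2] :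
            ∀ p ∈ Finset.univ.filter
              (fun p : (Fin l1 → Bool) × (Fin l2 → Bool) =>
                Qc l1 l2 p.1 p.2 ∧ ones p.1 + ones p.2 = r),
              (X : Polynomial ℤ) ^ (ones p.1 + ones p.2) = X ^ r)]
        rw [Finset.sum_const, nsmul_eq_mul, Polynomial.C_eq_natCast]
    _ = ∑ p ∈ Finset.univ.filter
          (fun p : (Fin l1 → Bool) × (Fin l2 → Bool) => Qc l1 l2 p.1 p.2),
          (X : Polynomial ℤ) ^ (ones p.1 + ones p.2) :=
        Finset.sum_fiberwise_of_maps_to hmap _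
    _ = Pgen l1 l2 := by
        rw [Pgen]
        exact Finset.sum_filter _ _

end LeAux

open Polynomial in
/-- For a partition `(λ₁, λ₂)` with `λ₁ ≥ λ₂ ≥ 0`:
`q·F_{(λ₁,λ₂)}(q) = −(1+q)^{λ₁} + (1+q)^{λ₁−λ₂+1}·(1+q+q²)^{λ₂}`. -/
theorem two_row_leF (l1 l2 : ℕ) (h : l2 ≤ l1) :
    (X : Polynomial ℤ) *
        (∑ r ∈ Finset.range (l1 + l2 + 1), Polynomial.C (leF ![l1, l2] r : ℤ) * X ^ r) =
      -(1 + X) ^ l1 + (1 + X) ^ (l1 - l2 + 1) * (1 + X + X ^ 2) ^ l2 := by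
  rw [sum_bridge l1 l2]
  exact Pgen_closed l2 l1 h
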